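/- Fix integer x_min ≥ 1 and integer data x_1,…,x_n with each x_i ≥ x_min and at least one x_i > x_min. Then for every r ≥ 0, the integral ∫_1^∞ α^r √(φ''(α, x_min)) ζ(α, x_min)^{−n} Π_{i=1}^n x_i^{−α} dα is finite, where φ''(α, x_min) = ζ''(α, x_min)/ζ(α, x_min) − (ζ'(α, x_min)/ζ(α, x_min))^2. -/

import Mathlib

open Real MeasureTheory Set Filter

section helpers

lemma stmt7_log1p_le {m : ℝ} (hm : 0 < m) : Real.log (1 + 1/m) ≤ 1/m := by
  have := Real.log_le_sub_one_of_pos (x := 1 + 1/m) (by positivity)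
  linarith

lemma stmt7_le_log1p {m : ℝ} (hm : 0 < m) : 1/(m+1) ≤ Real.log (1 + 1/m) := by
  have h1 : (0:ℝ) < m/(m+1) := by positivity
  have h := Real.log_le_sub_one_of_pos h1
  have hlog : Real.log (m/(m+1)) = - Real.log (1 + 1/m) := by
    rw [← Real.log_inv]; congr 1; field_simp
  rw [hlog] at h
  have h2 : m/(m+1) - 1 = -(1/(m+1)) := by field_simp; ring
  linarith

lemma stmt7_succ_rpow_eq {p m : ℝ} (hm : 0 < m) :
    (m+1) ^ p = m ^ p * Real.exp (p * Real.log (1+1/m)) := by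
  have h1 : m + 1 = m * (1 + 1/m) := by field_simp
  rw [h1, Real.mul_rpow (le_of_lt hm) (by positivity)]
  congr 1
  rw [Real.rpow_def_of_pos (by positivity), mul_comm]

lemma stmt7_telescope_upper {β m : ℝ} (hβ : 1 < β) (hm : 1 ≤ m) :
    m ^ (1-β) - (m+1) ^ (1-β) ≤ (β-1) * m ^ (-β) := by
  have hm0 : (0:ℝ) < m := by linarith
  set L := Real.log (1+1/m) with hLdef
  have hL : L ≤ 1/m := stmt7_log1p_le hm0
  have hpow : (0:ℝ) < m ^ (1-β) := Real.rpow_pos_of_pos hm0 _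
  have h2 : m ^ (1-β) * (1 + (1-β)*L) ≤ (m+1) ^ (1-β) := by
    rw [stmt7_succ_rpow_eq (p := 1-β) hm0]
    exact mul_le_mul_of_nonneg_left (by linarith [Real.add_one_le_exp ((1-β)*L)]) hpow.le
  have h3 : m ^ (1-β) * (1/m) = m ^ (-β) := by
    rw [show (1-β) = 1 + (-β) by ring, Real.rpow_add hm0, Real.rpow_one]
    field_simp
  calc m ^ (1-β) - (m+1) ^ (1-β) ≤ m ^ (1-β) - m ^ (1-β) * (1 + (1-β)*L) := by linarith
    _ = (β-1) * (m ^ (1-β) * L) := by ring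
    _ ≤ (β-1) * (m ^ (1-β) * (1/m)) :=
        mul_le_mul_of_nonneg_left (mul_le_mul_of_nonneg_left hL hpow.le) (by linarith)
    _ = (β-1) * m ^ (-β) := by rw [h3]

lemma stmt7_telescope_lower {β m : ℝ} (hβ : 1 < β) (hm : 1 ≤ m) :
    (β-1) * (m+1) ^ (-β) ≤ m ^ (1-β) - (m+1) ^ (1-β) := by
  have hm0 : (0:ℝ) < m := by linarith
  have hm1 : (0:ℝ) < m + 1 := by linarith
  set L := Real.log (1+1/m) with hLdef
  have hL : 1/(m+1) ≤ L := stmt7_le_log1p hm0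
  have hpow : (0:ℝ) < (m+1) ^ (1-β) := Real.rpow_pos_of_pos hm1 _
  have h2 : (m+1) ^ (1-β) * (1 + (β-1)*L) ≤ m ^ (1-β) := by
    have hkey : m ^ (1-β) = (m+1) ^ (1-β) * Real.exp ((β-1) * L) := by
      rw [stmt7_succ_rpow_eq (p := 1-β) hm0, mul_assoc, ← Real.exp_add,
        show (1-β)*L + (β-1)*L = 0 by ring, Real.exp_zero, mul_one]
    rw [hkey]
    exact mul_le_mul_of_nonneg_left (by linarith [Real.add_one_le_exp ((β-1)*L)]) hpow.le
  have h3 : (m+1) ^ (1-β) * (1/(m+1)) = (m+1) ^ (-β) := by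
    rw [show (1-β) = 1 + (-β) by ring, Real.rpow_add hm1, Real.rpow_one]
    field_simp
  calc (β-1) * (m+1) ^ (-β) = (β-1) * ((m+1) ^ (1-β) * (1/(m+1))) := by rw [h3]
    _ ≤ (β-1) * ((m+1) ^ (1-β) * L) :=
        mul_le_mul_of_nonneg_left (mul_le_mul_of_nonneg_left hL hpow.le) (by linarith)
    _ = (m+1) ^ (1-β) * (1 + (β-1)*L) - (m+1) ^ (1-β) := by ring
    _ ≤ m ^ (1-β) - (m+1) ^ (1-β) := by linarith

lemma stmt7_summable_Z {N : ℕ} {β : ℝ} (hβ : 1 < β) :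
    Summable (fun k : ℕ => ((k+N:ℕ):ℝ) ^ (-β)) :=
  (summable_nat_add_iff N).2 (Real.summable_nat_rpow.2 (by linarith))

lemma stmt7_tsum_Z_le {N : ℕ} {β : ℝ} (hN : 1 ≤ N) (hβ : 1 < β) :
    ∑' k:ℕ, ((k+N:ℕ):ℝ) ^ (-β) ≤ (N:ℝ) ^ (-β) + (N:ℝ) ^ (1-β)/(β-1) := by
  have hN1 : (1:ℝ) ≤ (N:ℝ) := by exact_mod_cast hN
  have hN0 : (0:ℝ) < (N:ℝ) := by linarith
  set g : ℕ → ℝ := fun i => ((i:ℝ)+N) ^ (1-β) with hg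
  have hg0 : (0:ℝ) ≤ (N:ℝ) ^ (-β) := Real.rpow_nonneg hN0.le _
  have hg1 : (0:ℝ) ≤ (N:ℝ) ^ (1-β)/(β-1) := by
    apply div_nonneg (Real.rpow_nonneg hN0.le _) (by linarith)
  apply Real.tsum_le_of_sum_range_le (fun k => Real.rpow_nonneg (by positivity) _)
  intro n
  match n with
  | 0 => simpa using by linarith
  | Nat.succ n =>
    rw [Finset.sum_range_succ']
    have hf0 : (((0:ℕ)+N:ℕ):ℝ) ^ (-β) = (N:ℝ) ^ (-β) := by norm_num
    rw [hf0]
    have h1 : ∀ i ∈ Finset.range n, (((i+1+N:ℕ)):ℝ) ^ (-β) ≤ (g i - g (i+1))/(β-1) := by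
      intro i _
      have hm : (1:ℝ) ≤ (i:ℝ)+N := by linarith [Nat.cast_nonneg (α := ℝ) i]
      have := stmt7_telescope_lower hβ hm
      have hcast : (((i+1+N:ℕ)):ℝ) = ((i:ℝ)+N)+1 := by push_cast; ring
      have hcast2 : g (i+1) = (((i:ℝ)+N)+1) ^ (1-β) := by rw [hg]; push_cast; ring_nf
      rw [hcast, hcast2, le_div_iff₀ (by linarith)]
      simp only [hg]
      linarith
    have h2 := Finset.sum_le_sum h1
    rw [← Finset.sum_div, Finset.sum_range_sub' g] at h2
    have h3 : (0:ℝ) ≤ g n := Real.rpow_nonneg (by positivity) _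
    have h4 : g 0 = (N:ℝ) ^ (1-β) := by rw [hg]; norm_num
    rw [h4] at h2
    have h5 : ((N:ℝ) ^ (1-β) - g n)/(β-1) ≤ (N:ℝ) ^ (1-β)/(β-1) :=
      div_le_div_of_nonneg_right (by linarith) (by linarith) |>.trans_eq rfl
    linarith

lemma stmt7_le_tsum_Z {N : ℕ} {β : ℝ} (hN : 1 ≤ N) (hβ : 1 < β) :
    (N:ℝ) ^ (1-β)/(β-1) ≤ ∑' k:ℕ, ((k+N:ℕ):ℝ) ^ (-β) := by
  have hN1 : (1:ℝ) ≤ (N:ℝ) := by exact_mod_cast hN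
  have hN0 : (0:ℝ) < (N:ℝ) := by linarith
  set g : ℕ → ℝ := fun i => ((i:ℝ)+N) ^ (1-β) with hg
  have hsum := stmt7_summable_Z (N := N) hβ
  have hpartial : ∀ n : ℕ, (g 0 - g n)/(β-1) ≤ ∑' k:ℕ, ((k+N:ℕ):ℝ) ^ (-β) := by
    intro n
    have h1 : ∀ i ∈ Finset.range n, (g i - g (i+1))/(β-1) ≤ (((i+N:ℕ)):ℝ) ^ (-β) := by
      intro i _
      have hm : (1:ℝ) ≤ (i:ℝ)+N := by linarith [Nat.cast_nonneg (α := ℝ) i]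
      have := stmt7_telescope_upper hβ hm
      have hcast : (((i+N:ℕ)):ℝ) = ((i:ℝ)+N) := by push_cast; ring
      have hcast2 : g (i+1) = (((i:ℝ)+N)+1) ^ (1-β) := by rw [hg]; push_cast; ring_nf
      rw [hcast, hcast2, div_le_iff₀ (by linarith)]
      simp only [hg]
      linarith
    have h2 := Finset.sum_le_sum h1
    rw [← Finset.sum_div, Finset.sum_range_sub' g] at h2
    exact h2.trans (Summable.sum_le_tsum _ (fun k _ => Real.rpow_nonneg (by positivity) _) hsum)
  have hlim : Filter.Tendsto (fun n : ℕ => (g 0 - g n)/(β-1)) Filter.atTop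
      (nhds ((g 0 - 0)/(β-1))) := by
    apply Filter.Tendsto.div_const
    apply Filter.Tendsto.const_sub
    have h1 : Filter.Tendsto (fun n : ℕ => ((n:ℝ)+N)) Filter.atTop Filter.atTop :=
      Filter.tendsto_atTop_add_const_right _ _ tendsto_natCast_atTop_atTop
    have h2 : Filter.Tendsto (fun x : ℝ => x ^ (1-β)) Filter.atTop (nhds 0) := by
      rw [show (1-β) = -(β-1) by ring]
      exact tendsto_rpow_neg_atTop (by linarith)
    exact h2.comp h1
  have h4 : g 0 = (N:ℝ) ^ (1-β) := by rw [hg]; norm_num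
  simp only [h4, sub_zero] at hlim hpartial
  exact le_of_tendsto hlim (Filter.Eventually.of_forall hpartial)

lemma stmt7_log_sq_le {m ε : ℝ} (hm : 1 ≤ m) (hε : 0 < ε) :
    (Real.log m)^2 ≤ (4/ε^2) * m ^ ε := by
  have h0 : 0 ≤ Real.log m := Real.log_nonneg hm
  have h1 : Real.log m ≤ m ^ (ε/2) / (ε/2) := Real.log_le_rpow_div (by linarith) (by linarith)
  have h2 : (Real.log m)^2 ≤ (m ^ (ε/2) / (ε/2))^2 := by
    apply pow_le_pow_left₀ h0 h1
  have h3 : (m ^ (ε/2))^2 = m ^ ε := by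
    rw [← Real.rpow_natCast (m ^ (ε/2)) 2, ← Real.rpow_mul (by linarith)]
    norm_num
  calc (Real.log m)^2 ≤ (m ^ (ε/2))^2 / (ε/2)^2 := by rw [div_pow] at h2; exact h2
    _ = (4/ε^2) * m ^ ε := by rw [h3]; field_simp; ring

-- per-term bound for the (log)^2 series
lemma stmt7_term_sq_bound {N : ℕ} (hN : 1 ≤ N) {α : ℝ} (hα : 1 < α) (k : ℕ) :
    (Real.log ((k+N:ℕ):ℝ))^2 * ((k+N:ℕ):ℝ) ^ (-α)
      ≤ (16/(α-1)^2) * ((k+N:ℕ):ℝ) ^ (-((α+1)/2)) := by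
  have ha1 : (1:ℝ) ≤ ((k+N:ℕ):ℝ) := by
    have : 1 ≤ k + N := le_add_of_le_right hN
    exact_mod_cast this
  have ha0 : (0:ℝ) < ((k+N:ℕ):ℝ) := by linarith
  have hε : (0:ℝ) < (α-1)/2 := by linarith
  have h1 := stmt7_log_sq_le ha1 hε
  have h2 : (4/((α-1)/2)^2) = 16/(α-1)^2 := by field_simp; ring
  rw [h2] at h1
  have h3 : (0:ℝ) ≤ ((k+N:ℕ):ℝ) ^ (-α) := Real.rpow_nonneg ha0.le _
  calc (Real.log ((k+N:ℕ):ℝ))^2 * ((k+N:ℕ):ℝ) ^ (-α)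
      ≤ (16/(α-1)^2) * ((k+N:ℕ):ℝ) ^ ((α-1)/2) * ((k+N:ℕ):ℝ) ^ (-α) :=
        mul_le_mul_of_nonneg_right h1 h3
    _ = (16/(α-1)^2) * ((k+N:ℕ):ℝ) ^ (-((α+1)/2)) := by
        rw [mul_assoc, ← Real.rpow_add ha0]
        congr 1
        ring

lemma stmt7_summable_Zsq {N : ℕ} (hN : 1 ≤ N) {α : ℝ} (hα : 1 < α) :
    Summable (fun k : ℕ => (Real.log ((k+N:ℕ):ℝ))^2 * ((k+N:ℕ):ℝ) ^ (-α)) := by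
  have hβ : 1 < (α+1)/2 := by linarith
  apply Summable.of_nonneg_of_le ?_ (stmt7_term_sq_bound hN hα) (((stmt7_summable_Z hβ)).mul_left _)
  intro k
  have ha0 : (0:ℝ) < ((k+N:ℕ):ℝ) := by
    have : 1 ≤ k + N := le_add_of_le_right hN
    exact_mod_cast Nat.lt_of_lt_of_le Nat.zero_lt_one this
  positivity

lemma stmt7_term_log_bound {N : ℕ} (hN : 1 ≤ N) {α : ℝ} (hα : 1 < α) (k : ℕ) :
    Real.log ((k+N:ℕ):ℝ) * ((k+N:ℕ):ℝ) ^ (-α)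
      ≤ (2/(α-1)) * ((k+N:ℕ):ℝ) ^ (-((α+1)/2)) := by
  have ha1 : (1:ℝ) ≤ ((k+N:ℕ):ℝ) := by
    have : 1 ≤ k + N := le_add_of_le_right hN
    exact_mod_cast this
  have ha0 : (0:ℝ) < ((k+N:ℕ):ℝ) := by linarith
  have hε : (0:ℝ) < (α-1)/2 := by linarith
  have h1 : Real.log ((k+N:ℕ):ℝ) ≤ ((k+N:ℕ):ℝ) ^ ((α-1)/2) / ((α-1)/2) :=
    Real.log_le_rpow_div ha0.le hε
  have h3 : (0:ℝ) ≤ ((k+N:ℕ):ℝ) ^ (-α) := Real.rpow_nonneg ha0.le _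
  calc Real.log ((k+N:ℕ):ℝ) * ((k+N:ℕ):ℝ) ^ (-α)
      ≤ (((k+N:ℕ):ℝ) ^ ((α-1)/2) / ((α-1)/2)) * ((k+N:ℕ):ℝ) ^ (-α) :=
        mul_le_mul_of_nonneg_right h1 h3
    _ = (((k+N:ℕ):ℝ) ^ ((α-1)/2) * ((k+N:ℕ):ℝ) ^ (-α)) * ((α-1)/2)⁻¹ := by
        rw [div_mul_eq_mul_div, div_eq_mul_inv]
    _ = (2/(α-1)) * ((k+N:ℕ):ℝ) ^ (-((α+1)/2)) := by
        rw [← Real.rpow_add ha0, show (α-1)/2 + -α = -((α+1)/2) by ring, mul_comm, inv_div]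

lemma stmt7_summable_Zlog {N : ℕ} (hN : 1 ≤ N) {α : ℝ} (hα : 1 < α) :
    Summable (fun k : ℕ => Real.log ((k+N:ℕ):ℝ) * ((k+N:ℕ):ℝ) ^ (-α)) := by
  have hβ : 1 < (α+1)/2 := by linarith
  apply Summable.of_nonneg_of_le ?_ (stmt7_term_log_bound hN hα)
    ((stmt7_summable_Z hβ).mul_left _)
  intro k
  have ha1 : (1:ℝ) ≤ ((k+N:ℕ):ℝ) := by
    have : 1 ≤ k + N := le_add_of_le_right hN
    exact_mod_cast this
  have h0 := Real.log_nonneg ha1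
  have ha0 : (0:ℝ) < ((k+N:ℕ):ℝ) := by linarith
  positivity

-- Z2 bound on (1,2]
lemma stmt7_Z2_le {N : ℕ} (hN : 1 ≤ N) {α : ℝ} (hα : 1 < α) (hα2 : α ≤ 2) :
    ∑' k:ℕ, (Real.log ((k+N:ℕ):ℝ))^2 * ((k+N:ℕ):ℝ) ^ (-α) ≤ 48/(α-1)^3 := by
  have hβ : 1 < (α+1)/2 := by linarith
  have hN1 : (1:ℝ) ≤ (N:ℝ) := by exact_mod_cast hN
  have h1 : ∑' k:ℕ, (Real.log ((k+N:ℕ):ℝ))^2 * ((k+N:ℕ):ℝ) ^ (-α)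
      ≤ ∑' k:ℕ, (16/(α-1)^2) * ((k+N:ℕ):ℝ) ^ (-((α+1)/2)) :=
    Summable.tsum_le_tsum (stmt7_term_sq_bound hN hα) (stmt7_summable_Zsq hN hα)
      ((stmt7_summable_Z hβ).mul_left _)
  rw [tsum_mul_left] at h1
  have h2 : ∑' k:ℕ, ((k+N:ℕ):ℝ) ^ (-((α+1)/2)) ≤ 1 + 2/(α-1) := by
    refine (stmt7_tsum_Z_le hN hβ).trans ?_
    have e1 : (N:ℝ) ^ (-((α+1)/2)) ≤ 1 :=
      Real.rpow_le_one_of_one_le_of_nonpos hN1 (by linarith)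
    have e2 : (N:ℝ) ^ (1-(α+1)/2) ≤ 1 :=
      Real.rpow_le_one_of_one_le_of_nonpos hN1 (by linarith)
    have e3 : (α+1)/2 - 1 = (α-1)/2 := by ring
    have e4 : (N:ℝ) ^ (1-(α+1)/2)/((α+1)/2-1) ≤ 2/(α-1) := by
      rw [e3, div_div_eq_mul_div]
      exact div_le_div_of_nonneg_right (by linarith) (by linarith)
    linarith
  have hc : (0:ℝ) ≤ 16/(α-1)^2 := by positivity
  have ht : 0 < α - 1 := by linarith
  have e5 : 1 + 2/(α-1) = (α+1)/(α-1) := by field_simp; ring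
  calc ∑' k:ℕ, (Real.log ((k+N:ℕ):ℝ))^2 * ((k+N:ℕ):ℝ) ^ (-α)
      ≤ (16/(α-1)^2) * (1 + 2/(α-1)) := h1.trans (mul_le_mul_of_nonneg_left h2 hc)
    _ = 16*(α+1)/(α-1)^3 := by rw [e5, div_mul_div_comm, ← pow_succ]
    _ ≤ 48/(α-1)^3 := div_le_div_of_nonneg_right (by linarith) (by positivity)

end helpers

lemma stmt7_meas_term {cc : ℝ} (hc : 0 < cc) : Measurable (fun α : ℝ => cc ^ (-α)) := by
  simp_rw [Real.rpow_def_of_pos hc]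
  fun_prop

lemma stmt7_aemeas_tsum {f : ℕ → ℝ → ℝ} (hmeas : ∀ k, Measurable (f k))
    (hsum : ∀ α ∈ Set.Ioi (1:ℝ), Summable (fun k => f k α)) :
    AEMeasurable (fun α => ∑' k, f k α) (MeasureTheory.volume.restrict (Set.Ioi 1)) := by
  refine aemeasurable_of_tendsto_metrizable_ae Filter.atTop
    (fun n => ((Finset.measurable_sum (Finset.range n) (fun k _ => hmeas k)).aemeasurable)) ?_
  rw [MeasureTheory.ae_restrict_iff' measurableSet_Ioi]
  exact Filter.Eventually.of_forall (fun α hα => ((hsum α hα).hasSum.tendsto_sum_nat))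

set_option maxHeartbeats 1000000 in
theorem stmt7 (x_min : ℕ) (hxm : 1 ≤ x_min) (n : ℕ) (x : Fin n → ℕ)
    (hx : ∀ i, x_min ≤ x i) (hx' : ∃ i, x_min < x i) (r : ℝ) (hr : 0 ≤ r) :
    MeasureTheory.IntegrableOn
      (fun α : ℝ => α ^ r
        * Real.sqrt
            ((∑' k : ℕ, (Real.log ((k + x_min : ℕ) : ℝ)) ^ 2 * ((k + x_min : ℕ) : ℝ) ^ (-α))
                / (∑' k : ℕ, ((k + x_min : ℕ) : ℝ) ^ (-α))
              - ((-∑' k : ℕ, Real.log ((k + x_min : ℕ) : ℝ) * ((k + x_min : ℕ) : ℝ) ^ (-α))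
                  / (∑' k : ℕ, ((k + x_min : ℕ) : ℝ) ^ (-α))) ^ 2)
        * ((∑' k : ℕ, ((k + x_min : ℕ) : ℝ) ^ (-α)) ^ n)⁻¹ * ∏ i, (x i : ℝ) ^ (-α))
      (Set.Ioi 1) := by
  classical
  obtain ⟨i₀, hi₀⟩ := hx'
  have hn1 : 1 ≤ n := i₀.pos
  have hN1 : (1:ℝ) ≤ (x_min:ℝ) := by exact_mod_cast hxm
  have hN0 : (0:ℝ) < (x_min:ℝ) := by linarith
  set c := Real.log (x_min:ℝ) with hcdef
  have hc0 : 0 ≤ c := Real.log_nonneg hN1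
  set L := ∑ i, Real.log ((x i : ℝ)) with hLdef
  set δ := L - n * c with hδdef
  have hxi1 : ∀ i, (1:ℝ) ≤ (x i : ℝ) := fun i => by exact_mod_cast le_trans hxm (hx i)
  have hxi0 : ∀ i, (0:ℝ) < (x i : ℝ) := fun i => lt_of_lt_of_le one_pos (hxi1 i)
  have hδ : 0 < δ := by
    have he : δ = ∑ i, (Real.log (x i : ℝ) - c) := by
      rw [hδdef, hLdef, Finset.sum_sub_distrib, Finset.sum_const, Finset.card_univ,
        Fintype.card_fin, nsmul_eq_mul]
    rw [he]
    apply Finset.sum_pos' (fun i _ => by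
        have := Real.log_le_log hN0 (show (x_min:ℝ) ≤ (x i : ℝ) by exact_mod_cast hx i)
        linarith)
    exact ⟨i₀, Finset.mem_univ _, by
      have := Real.log_lt_log hN0 (show (x_min:ℝ) < (x i₀ : ℝ) by exact_mod_cast hi₀)
      linarith⟩
  have haN : ∀ k : ℕ, (x_min:ℝ) ≤ ((k + x_min:ℕ):ℝ) := fun k => by
    exact_mod_cast Nat.le_add_left x_min k
  have ha1 : ∀ k : ℕ, (1:ℝ) ≤ ((k + x_min:ℕ):ℝ) := fun k => le_trans hN1 (haN k)
  have ha0 : ∀ k : ℕ, (0:ℝ) < ((k + x_min:ℕ):ℝ) := fun k => lt_of_lt_of_le one_pos (ha1 k)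
  have hca : ∀ k : ℕ, c ≤ Real.log ((k + x_min:ℕ):ℝ) := fun k => Real.log_le_log hN0 (haN k)
  have hlognn : ∀ k : ℕ, 0 ≤ Real.log ((k + x_min:ℕ):ℝ) := fun k => Real.log_nonneg (ha1 k)
  -- the constant C2 (variance-comparison constant for large α)
  set C2 := ∑' k : ℕ, (Real.log ((k + x_min :ℕ):ℝ) - c)^2
      * ((x_min:ℝ)^(2:ℝ) * ((k + x_min:ℕ):ℝ) ^ (-(2:ℝ))) with hC2def
  have hC2term : ∀ k : ℕ, (Real.log ((k + x_min :ℕ):ℝ) - c)^2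
      * ((x_min:ℝ)^(2:ℝ) * ((k + x_min:ℕ):ℝ) ^ (-(2:ℝ)))
      ≤ (x_min:ℝ)^(2:ℝ) * ((Real.log ((k + x_min :ℕ):ℝ))^2 * ((k + x_min:ℕ):ℝ) ^ (-(2:ℝ))) := by
    intro k
    have h1 : (Real.log ((k + x_min :ℕ):ℝ) - c)^2 ≤ (Real.log ((k + x_min :ℕ):ℝ))^2 := by
      apply pow_le_pow_left₀ (by linarith [hca k]) (by linarith [hc0])
    have h2 : (0:ℝ) ≤ (x_min:ℝ)^(2:ℝ) * ((k + x_min:ℕ):ℝ) ^ (-(2:ℝ)) := by positivity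
    calc (Real.log ((k + x_min :ℕ):ℝ) - c)^2 * ((x_min:ℝ)^(2:ℝ) * ((k + x_min:ℕ):ℝ) ^ (-(2:ℝ)))
        ≤ (Real.log ((k + x_min :ℕ):ℝ))^2 * ((x_min:ℝ)^(2:ℝ) * ((k + x_min:ℕ):ℝ) ^ (-(2:ℝ))) :=
          mul_le_mul_of_nonneg_right h1 h2
      _ = (x_min:ℝ)^(2:ℝ) * ((Real.log ((k + x_min :ℕ):ℝ))^2 * ((k + x_min:ℕ):ℝ) ^ (-(2:ℝ))) := by
          ring
  have hC2sum : Summable (fun k : ℕ => (Real.log ((k + x_min :ℕ):ℝ) - c)^2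
      * ((x_min:ℝ)^(2:ℝ) * ((k + x_min:ℕ):ℝ) ^ (-(2:ℝ)))) := by
    apply Summable.of_nonneg_of_le (fun k => by positivity) hC2term
    exact (stmt7_summable_Zsq hxm (by norm_num : (1:ℝ) < 2)).mul_left _
  have hC2nonneg : 0 ≤ C2 := tsum_nonneg (fun k => by positivity)
  set K₁ := (2:ℝ)^r * (8 * Real.sqrt (x_min:ℝ) * (x_min:ℝ)^n) with hK₁def
  have hK₁0 : (0:ℝ) ≤ K₁ := by positivity
  set C := max (K₁ * Real.exp (2*δ)) (Real.sqrt C2) with hCdef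
  have hC0 : 0 ≤ C := le_trans (Real.sqrt_nonneg _) (le_max_right _ _)
  -- integrable dominating function
  have hg : MeasureTheory.IntegrableOn (fun α : ℝ => C * (α ^ r * Real.exp (-δ * α)))
      (Set.Ioi 1) := by
    have h0 : MeasureTheory.IntegrableOn (fun α : ℝ => α ^ r * Real.exp (-δ * α))
        (Set.Ioi 0) := by
      have := integrableOn_rpow_mul_exp_neg_mul_rpow (show (-1:ℝ) < r by linarith) zero_lt_one hδ
      simpa [Real.rpow_one] using this
    exact (h0.mono_set (Set.Ioi_subset_Ioi zero_le_one)).const_mul C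
  apply MeasureTheory.Integrable.mono' hg
  · -- measurability
    apply AEMeasurable.aestronglyMeasurable
    have hma : ∀ k : ℕ, Measurable (fun α : ℝ => ((k + x_min:ℕ):ℝ) ^ (-α)) :=
      fun k => stmt7_meas_term (ha0 k)
    have hZm : AEMeasurable (fun α : ℝ => ∑' k : ℕ, ((k + x_min:ℕ):ℝ) ^ (-α))
        (MeasureTheory.volume.restrict (Set.Ioi 1)) :=
      stmt7_aemeas_tsum hma (fun α hα => stmt7_summable_Z hα)
    have hZ1m : AEMeasurable
        (fun α : ℝ => ∑' k : ℕ, Real.log ((k + x_min:ℕ):ℝ) * ((k + x_min:ℕ):ℝ) ^ (-α))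
        (MeasureTheory.volume.restrict (Set.Ioi 1)) :=
      stmt7_aemeas_tsum (fun k => (hma k).const_mul _)
        (fun α hα => stmt7_summable_Zlog hxm hα)
    have hZ2m : AEMeasurable
        (fun α : ℝ => ∑' k : ℕ, (Real.log ((k + x_min:ℕ):ℝ))^2 * ((k + x_min:ℕ):ℝ) ^ (-α))
        (MeasureTheory.volume.restrict (Set.Ioi 1)) :=
      stmt7_aemeas_tsum (fun k => (hma k).const_mul _)
        (fun α hα => stmt7_summable_Zsq hxm hα)
    have hmr : Measurable (fun α : ℝ => α ^ r) := by fun_prop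
    have hmp : Measurable (fun α : ℝ => ∏ i, (x i : ℝ) ^ (-α)) := by
      apply Finset.measurable_prod
      intro i _
      exact stmt7_meas_term (hxi0 i)
    exact (((hmr.aemeasurable.mul
      (Real.continuous_sqrt.measurable.comp_aemeasurable
        ((hZ2m.div hZm).sub (((hZ1m.neg).div hZm).pow_const 2)))).mul
      ((hZm.pow_const n).inv)).mul hmp.aemeasurable)
  · -- the bound
    rw [MeasureTheory.ae_restrict_iff' measurableSet_Ioi]
    refine Filter.Eventually.of_forall (fun α hα => ?_)
    simp only [Set.mem_Ioi] at hα
    have hα0 : (0:ℝ) < α := by linarith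
    set Z := ∑' k : ℕ, ((k + x_min:ℕ):ℝ) ^ (-α) with hZdef
    set Z1 := ∑' k : ℕ, Real.log ((k + x_min:ℕ):ℝ) * ((k + x_min:ℕ):ℝ) ^ (-α) with hZ1def
    set Z2 := ∑' k : ℕ, (Real.log ((k + x_min:ℕ):ℝ))^2 * ((k + x_min:ℕ):ℝ) ^ (-α) with hZ2def
    set P := ∏ i, (x i : ℝ) ^ (-α) with hPdef
    have hZsum := stmt7_summable_Z (N := x_min) hα
    have hZ0 : (x_min:ℝ) ^ (-α) ≤ Z := by
      have h00 := Summable.le_tsum hZsum 0 (fun j _ => Real.rpow_nonneg (ha0 j).le _)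
      simpa only [Nat.zero_add] using h00
    have hZpos : 0 < Z := lt_of_lt_of_le (Real.rpow_pos_of_pos hN0 _) hZ0
    have hPnn : 0 ≤ P := Finset.prod_nonneg (fun i _ => Real.rpow_nonneg (hxi0 i).le _)
    have hP1 : P ≤ 1 := Finset.prod_le_one
      (fun i _ => Real.rpow_nonneg (hxi0 i).le _)
      (fun i _ => Real.rpow_le_one_of_one_le_of_nonpos (hxi1 i) (by linarith))
    have hFnn : 0 ≤ α ^ r * Real.sqrt (Z2/Z - ((-Z1)/Z)^2) * ((Z)^n)⁻¹ * P :=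
      mul_nonneg (mul_nonneg (mul_nonneg (Real.rpow_nonneg hα0.le r)
        (Real.sqrt_nonneg _)) (inv_nonneg.2 (pow_nonneg hZpos.le n))) hPnn
    rw [Real.norm_of_nonneg hFnn]
    have hsqnn : 0 ≤ ((-Z1)/Z)^2 := sq_nonneg _
    rcases le_or_gt α 2 with hα2 | hα2
    · -- small α regime
      have ht : (0:ℝ) < α - 1 := by linarith
      have ht1 : α - 1 ≤ 1 := by linarith
      have hZlow : 1/((x_min:ℝ)*(α-1)) ≤ Z := by
        have h1 := stmt7_le_tsum_Z hxm hα
        have h2 : (x_min:ℝ) ^ (-(1:ℝ)) ≤ (x_min:ℝ) ^ (1-α) :=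
          Real.rpow_le_rpow_of_exponent_le hN1 (by linarith)
        rw [Real.rpow_neg_one] at h2
        have h3 : 1/((x_min:ℝ)*(α-1)) = ((x_min:ℝ))⁻¹/(α-1) := by
          rw [← one_div, div_div]
        rw [h3]
        exact (div_le_div_of_nonneg_right h2 ht.le).trans h1
      have hZinv : Z⁻¹ ≤ (x_min:ℝ)*(α-1) := by
        have hpos : (0:ℝ) < 1/((x_min:ℝ)*(α-1)) := by positivity
        have h := inv_anti₀ hpos hZlow
        rwa [one_div, inv_inv] at h
      have hZ2nn : (0:ℝ) ≤ Z2 := tsum_nonneg (fun k => by positivity)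
      have hq0 : (0:ℝ) ≤ 8*Real.sqrt (x_min:ℝ)/(α-1) :=
        le_of_lt (div_pos (by positivity) ht)
      have hsqrt : Real.sqrt (Z2/Z - ((-Z1)/Z)^2) ≤ 8*Real.sqrt (x_min:ℝ)/(α-1) := by
        have hφ : Z2/Z - ((-Z1)/Z)^2 ≤ (8*Real.sqrt (x_min:ℝ)/(α-1))^2 := by
          have hb1 : Z2/Z ≤ Z2 * ((x_min:ℝ)*(α-1)) := by
            rw [div_eq_mul_inv]
            exact mul_le_mul_of_nonneg_left hZinv hZ2nn
          have hb2 : Z2 * ((x_min:ℝ)*(α-1)) ≤ (48/(α-1)^3) * ((x_min:ℝ)*(α-1)) :=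
            mul_le_mul_of_nonneg_right (stmt7_Z2_le hxm hα hα2) (by positivity)
          have hb3 : (48/(α-1)^3) * ((x_min:ℝ)*(α-1)) = 48*(x_min:ℝ)/(α-1)^2 := by
            field_simp
          have hb3' : 48*(x_min:ℝ)/(α-1)^2 ≤ 64*(x_min:ℝ)/(α-1)^2 :=
            div_le_div_of_nonneg_right (by linarith) (by positivity)
          have hb4 : (8*Real.sqrt (x_min:ℝ)/(α-1))^2 = 64*(x_min:ℝ)/(α-1)^2 := by
            rw [div_pow, mul_pow, Real.sq_sqrt hN0.le]
            norm_num
          rw [hb4]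
          rw [hb3] at hb2
          linarith
        calc Real.sqrt (Z2/Z - ((-Z1)/Z)^2)
            ≤ Real.sqrt ((8*Real.sqrt (x_min:ℝ)/(α-1))^2) := Real.sqrt_le_sqrt hφ
          _ = 8*Real.sqrt (x_min:ℝ)/(α-1) := Real.sqrt_sq hq0
      have hZn : ((Z)^n)⁻¹ ≤ (x_min:ℝ)^n * (α-1) := by
        rw [← inv_pow]
        calc (Z⁻¹)^n ≤ ((x_min:ℝ)*(α-1))^n :=
              pow_le_pow_left₀ (inv_nonneg.2 hZpos.le) hZinv n
          _ = (x_min:ℝ)^n * (α-1)^n := mul_pow _ _ n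
          _ ≤ (x_min:ℝ)^n * (α-1) := by
              apply mul_le_mul_of_nonneg_left ?_ (by positivity)
              calc (α-1)^n ≤ (α-1)^1 := pow_le_pow_of_le_one ht.le ht1 hn1
                _ = α-1 := pow_one _
      have hαr : α ^ r ≤ 2 ^ r := Real.rpow_le_rpow hα0.le (by linarith) hr
      have hrhs0 : (0:ℝ) ≤ (2:ℝ)^r * (8*Real.sqrt (x_min:ℝ)/(α-1)) :=
        mul_nonneg (Real.rpow_nonneg (by norm_num) r) hq0
      have step : α ^ r * Real.sqrt (Z2/Z - ((-Z1)/Z)^2) * ((Z)^n)⁻¹ * P ≤ K₁ := by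
        calc α ^ r * Real.sqrt (Z2/Z - ((-Z1)/Z)^2) * ((Z)^n)⁻¹ * P
            ≤ ((2:ℝ)^r * (8*Real.sqrt (x_min:ℝ)/(α-1))) * ((x_min:ℝ)^n * (α-1)) * 1 := by
              apply mul_le_mul ?_ hP1 hPnn
                (mul_nonneg hrhs0 (mul_nonneg (by positivity) ht.le))
              apply mul_le_mul ?_ hZn (inv_nonneg.2 (pow_nonneg hZpos.le n)) hrhs0
              exact mul_le_mul hαr hsqrt (Real.sqrt_nonneg _) (Real.rpow_nonneg (by norm_num) r)
          _ = K₁ := by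
              rw [hK₁def, mul_one]
              field_simp
      have hαr1 : (1:ℝ) ≤ α ^ r := Real.one_le_rpow hα.le hr
      have hexp2 : Real.exp (-(2*δ)) ≤ Real.exp (-δ*α) := by
        apply Real.exp_le_exp.2
        nlinarith
      calc α ^ r * Real.sqrt (Z2/Z - ((-Z1)/Z)^2) * ((Z)^n)⁻¹ * P ≤ K₁ := step
        _ = (K₁ * Real.exp (2*δ)) * (1 * Real.exp (-(2*δ))) := by
            rw [one_mul, mul_assoc, ← Real.exp_add]
            simp
        _ ≤ C * (α^r * Real.exp (-δ*α)) := by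
            apply mul_le_mul (le_max_left _ _)
              (mul_le_mul hαr1 hexp2 (Real.exp_pos _).le (by linarith))
              (mul_nonneg (by linarith) (Real.exp_pos _).le) hC0
    · -- large α regime
      have hZinv2 : Z⁻¹ ≤ (x_min:ℝ)^α := by
        have h := inv_anti₀ (Real.rpow_pos_of_pos hN0 (-α)) hZ0
        rwa [Real.rpow_neg hN0.le, inv_inv] at h
      set W := ∑' k : ℕ, (Real.log ((k + x_min:ℕ):ℝ) - c)^2 * ((k + x_min:ℕ):ℝ) ^ (-α)
        with hWdef
      have hS1 := stmt7_summable_Zlog hxm hα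
      have hS2 := stmt7_summable_Zsq hxm hα
      have hWfun : (fun k : ℕ => (Real.log ((k + x_min:ℕ):ℝ) - c)^2 * ((k + x_min:ℕ):ℝ) ^ (-α))
          = fun k : ℕ => ((Real.log ((k + x_min:ℕ):ℝ))^2 * ((k + x_min:ℕ):ℝ) ^ (-α)
            - (2*c) * (Real.log ((k + x_min:ℕ):ℝ) * ((k + x_min:ℕ):ℝ) ^ (-α)))
            + c^2 * ((k + x_min:ℕ):ℝ) ^ (-α) := funext fun k => by ring
      have hWsum : Summable (fun k : ℕ =>
          (Real.log ((k + x_min:ℕ):ℝ) - c)^2 * ((k + x_min:ℕ):ℝ) ^ (-α)) := by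
        rw [hWfun]
        exact (hS2.sub (hS1.mul_left _)).add (hZsum.mul_left _)
      have hWnn : 0 ≤ W := tsum_nonneg (fun k => by positivity)
      have hWval : W = Z2 - 2*c*Z1 + c^2*Z := by
        rw [hWdef, hZ2def, hZ1def, hZdef, hWfun,
          Summable.tsum_add (hS2.sub (hS1.mul_left _)) (hZsum.mul_left _),
          Summable.tsum_sub hS2 (hS1.mul_left _), tsum_mul_left, tsum_mul_left]
      have hφ2 : Z2/Z - ((-Z1)/Z)^2 ≤ C2 := by
        have e0 : ((-Z1)/Z)^2 = (Z1/Z)^2 := by rw [neg_div, neg_sq]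
        have hA : Z2/Z - (Z1/Z)^2 ≤ W/Z := by
          have hsq2 : 2*c*(Z1/Z) - c^2 ≤ (Z1/Z)^2 := by nlinarith [sq_nonneg (Z1/Z - c)]
          have he : W/Z = Z2/Z - 2*c*(Z1/Z) + c^2 := by
            rw [hWval]
            field_simp
          linarith
        have hB : W/Z ≤ W * (x_min:ℝ)^α := by
          rw [div_eq_mul_inv]
          exact mul_le_mul_of_nonneg_left hZinv2 hWnn
        have hCb : W * (x_min:ℝ)^α ≤ C2 := by
          rw [hWdef, ← tsum_mul_right]
          apply Summable.tsum_le_tsum ?_ (hWsum.mul_right _) hC2sum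
          intro k
          have hd0 : (0:ℝ) < (x_min:ℝ)/((k + x_min:ℕ):ℝ) := div_pos hN0 (ha0 k)
          have hd1 : (x_min:ℝ)/((k + x_min:ℕ):ℝ) ≤ 1 := div_le_one_of_le₀ (haN k) (ha0 k).le
          have he1 : ((x_min:ℝ)/((k + x_min:ℕ):ℝ)) ^ α
              ≤ ((x_min:ℝ)/((k + x_min:ℕ):ℝ)) ^ (2:ℝ) :=
            Real.rpow_le_rpow_of_exponent_ge hd0 hd1 hα2.le
          have he2 : ∀ β : ℝ, ((x_min:ℝ)/((k + x_min:ℕ):ℝ)) ^ β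
              = (x_min:ℝ)^β * ((k + x_min:ℕ):ℝ) ^ (-β) := by
            intro β
            rw [Real.div_rpow hN0.le (ha0 k).le, Real.rpow_neg (ha0 k).le, div_eq_mul_inv]
          rw [he2, he2] at he1
          calc (Real.log ((k + x_min:ℕ):ℝ) - c)^2 * ((k + x_min:ℕ):ℝ) ^ (-α) * (x_min:ℝ)^α
              = (Real.log ((k + x_min:ℕ):ℝ) - c)^2
                  * ((x_min:ℝ)^α * ((k + x_min:ℕ):ℝ) ^ (-α)) := by ring
            _ ≤ (Real.log ((k + x_min:ℕ):ℝ) - c)^2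
                  * ((x_min:ℝ)^(2:ℝ) * ((k + x_min:ℕ):ℝ) ^ (-(2:ℝ))) :=
              mul_le_mul_of_nonneg_left he1 (sq_nonneg _)
        rw [e0]
        linarith [hA.trans (hB.trans hCb)]
      have hsqrt2 : Real.sqrt (Z2/Z - ((-Z1)/Z)^2) ≤ Real.sqrt C2 := Real.sqrt_le_sqrt hφ2
      have hzP : ((Z)^n)⁻¹ * P ≤ Real.exp (-δ*α) := by
        have h1 : ((Z)^n)⁻¹ ≤ ((x_min:ℝ)^α)^n := by
          rw [← inv_pow]
          exact pow_le_pow_left₀ (inv_nonneg.2 hZpos.le) hZinv2 n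
        have hPe : P = Real.exp (L * (-α)) := by
          rw [hPdef, hLdef, Finset.prod_congr rfl (fun i _ => Real.rpow_def_of_pos (hxi0 i) (-α)),
            ← Real.exp_sum, ← Finset.sum_mul]
        have hxe : ((x_min:ℝ)^α)^n = Real.exp ((n*c)*α) := by
          rw [Real.rpow_def_of_pos hN0, ← Real.exp_nat_mul]
          congr 1
          ring
        calc ((Z)^n)⁻¹ * P ≤ ((x_min:ℝ)^α)^n * P := mul_le_mul_of_nonneg_right h1 hPnn
          _ = Real.exp ((n*c)*α) * Real.exp (L*(-α)) := by rw [hxe, hPe]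
          _ = Real.exp (-δ*α) := by
              rw [← Real.exp_add]
              congr 1
              rw [hδdef]
              ring
      rw [mul_assoc]
      calc α^r * Real.sqrt (Z2/Z - ((-Z1)/Z)^2) * (((Z)^n)⁻¹ * P)
          ≤ (α^r * Real.sqrt C2) * Real.exp (-δ*α) := by
            apply mul_le_mul (mul_le_mul_of_nonneg_left hsqrt2 (Real.rpow_nonneg hα0.le r)) hzP
              (mul_nonneg (inv_nonneg.2 (pow_nonneg hZpos.le n)) hPnn)
              (mul_nonneg (Real.rpow_nonneg hα0.le r) (Real.sqrt_nonneg _))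
        _ = Real.sqrt C2 * (α^r * Real.exp (-δ*α)) := by ring
        _ ≤ C * (α^r * Real.exp (-δ*α)) := mul_le_mul_of_nonneg_right (le_max_right _ _)
            (mul_nonneg (Real.rpow_nonneg hα0.le r) (Real.exp_pos _).le)
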